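/- (Lemma 2) The value function V is convex in each coordinate separately: for all c ∈ [0,1], all p, p' ∈ [0,1] and all p1, p2 ∈ [0,1], V(c·p + (1−c)·p', p2) ≤ c·V(p, p2) + (1−c)·V(p', p2) and V(p1, c·p + (1−c)·p') ≤ c·V(p1, p) + (1−c)·V(p1, p'). -/
import Mathlib


open Set

noncomputable section

/-- Belief update for an unobserved channel: `T p = λ0 + (λ1 - λ0) p`. -/
def Tr (l0 l1 p : ℝ) : ℝ := l0 + (l1 - l0) * p

/-- The four power allocation actions. -/
inductive PAct
  | Bb  -- balanced
  | B1  -- bet on channel 1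
  | B2  -- bet on channel 2
  | Br  -- conservative

/-- Action-value functional `W_a` computed from a function `W`. -/
def Q (l0 l1 β Rl Rh Cl Ch : ℝ) (W : ℝ → ℝ → ℝ) : PAct → ℝ → ℝ → ℝ
  | PAct.Bb => fun p1 p2 =>
      (p1 + p2) * (Rl + Cl) - 2 * Cl +
        β * ((1 - p1) * (1 - p2) * W l0 l0 + p1 * p2 * W l1 l1 +
             p1 * (1 - p2) * W l1 l0 + (1 - p1) * p2 * W l0 l1)
  | PAct.B1 => fun p1 p2 =>
      (Rh + Ch) * p1 - Ch +
        β * (p1 * W l1 (Tr l0 l1 p2) + (1 - p1) * W l0 (Tr l0 l1 p2))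
  | PAct.B2 => fun p1 p2 =>
      (Rh + Ch) * p2 - Ch +
        β * (p2 * W (Tr l0 l1 p1) l1 + (1 - p2) * W (Tr l0 l1 p1) l0)
  | PAct.Br => fun p1 p2 => β * W (Tr l0 l1 p1) (Tr l0 l1 p2)

/-- The Bellman operator `L W = max over the four actions of W_a`. -/
def Bop (l0 l1 β Rl Rh Cl Ch : ℝ) (W : ℝ → ℝ → ℝ) (p1 p2 : ℝ) : ℝ :=
  max (max (Q l0 l1 β Rl Rh Cl Ch W PAct.Bb p1 p2)
           (Q l0 l1 β Rl Rh Cl Ch W PAct.B1 p1 p2))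
      (max (Q l0 l1 β Rl Rh Cl Ch W PAct.B2 p1 p2)
           (Q l0 l1 β Rl Rh Cl Ch W PAct.Br p1 p2))

/-- Boundedness on the belief space `[0,1] × [0,1]`. -/
def BddOnSq (W : ℝ → ℝ → ℝ) : Prop :=
  ∃ M : ℝ, ∀ p1 ∈ Icc (0:ℝ) 1, ∀ p2 ∈ Icc (0:ℝ) 1, |W p1 p2| ≤ M

/-- Being a fixed point of the Bellman operator on the belief space. -/
def IsFix (l0 l1 β Rl Rh Cl Ch : ℝ) (V : ℝ → ℝ → ℝ) : Prop :=
  ∀ p1 ∈ Icc (0:ℝ) 1, ∀ p2 ∈ Icc (0:ℝ) 1,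
    V p1 p2 = Bop l0 l1 β Rl Rh Cl Ch V p1 p2


lemma combo_mem {c p p' : ℝ} (hc : c ∈ Icc (0:ℝ) 1) (hp : p ∈ Icc (0:ℝ) 1)
    (hp' : p' ∈ Icc (0:ℝ) 1) : c * p + (1 - c) * p' ∈ Icc (0:ℝ) 1 := by
  obtain ⟨h1, h2⟩ := hc; obtain ⟨h3, h4⟩ := hp; obtain ⟨h5, h6⟩ := hp'
  constructor <;> nlinarith

lemma Tr_mem {l0 l1 p : ℝ} (hl0 : l0 ∈ Icc (0:ℝ) 1) (hl1 : l1 ∈ Icc (0:ℝ) 1)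
    (hle : l0 ≤ l1) (hp : p ∈ Icc (0:ℝ) 1) : Tr l0 l1 p ∈ Icc (0:ℝ) 1 := by
  obtain ⟨h1, h2⟩ := hl0; obtain ⟨h3, h4⟩ := hl1; obtain ⟨h5, h6⟩ := hp
  unfold Tr; constructor <;> nlinarith

lemma Tr_combo (l0 l1 c p p' : ℝ) :
    Tr l0 l1 (c * p + (1 - c) * p') = c * Tr l0 l1 p + (1 - c) * Tr l0 l1 p' := by
  unfold Tr; ring

set_option maxHeartbeats 1000000 in
/-- Lemma 2: the value function is convex in each coordinate separately. -/
theorem value_convex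
    (l0 l1 β Rl Rh Cl Ch : ℝ)
    (hl0 : l0 ∈ Icc (0:ℝ) 1) (hl1 : l1 ∈ Icc (0:ℝ) 1) (hl01 : l0 < l1)
    (hβ0 : 0 ≤ β) (hβ1 : β < 1)
    (hRl : 0 < Rl) (hRh : 0 < Rh) (hCl : 0 < Cl) (hCh : 0 < Ch)
    (hRlh : Rl < Rh) (hRh2 : Rh < 2 * Rl)
    (hClh : Cl < Ch) (hCh2 : Ch < 2 * Cl)
    (hRhCh : Ch < Rh) (hRlCl : Cl < Rl)
    (V : ℝ → ℝ → ℝ) (hVbdd : BddOnSq V)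
    (hVfix : IsFix l0 l1 β Rl Rh Cl Ch V)
    (c : ℝ) (hc : c ∈ Icc (0:ℝ) 1)
    (p : ℝ) (hp : p ∈ Icc (0:ℝ) 1) (p' : ℝ) (hp' : p' ∈ Icc (0:ℝ) 1)
    (p1 : ℝ) (hp1 : p1 ∈ Icc (0:ℝ) 1) (p2 : ℝ) (hp2 : p2 ∈ Icc (0:ℝ) 1) :
    V (c * p + (1 - c) * p') p2 ≤ c * V p p2 + (1 - c) * V p' p2 ∧
    V p1 (c * p + (1 - c) * p') ≤ c * V p1 p + (1 - c) * V p1 p' := by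
  obtain ⟨M, hM⟩ := hVbdd
  -- the set of all convexity defects (in either coordinate)
  set S : Set ℝ := { d | ∃ c' ∈ Icc (0:ℝ) 1, ∃ a ∈ Icc (0:ℝ) 1, ∃ b ∈ Icc (0:ℝ) 1,
      ∃ q ∈ Icc (0:ℝ) 1,
      d = V (c' * a + (1 - c') * b) q - (c' * V a q + (1 - c') * V b q) ∨
      d = V q (c' * a + (1 - c') * b) - (c' * V q a + (1 - c') * V q b) } with hSdef
  have h01 : (0:ℝ) ∈ Icc (0:ℝ) 1 := by norm_num
  have h11 : (1:ℝ) ∈ Icc (0:ℝ) 1 := by norm_num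
  have hSne : S.Nonempty := by
    refine ⟨V (1 * 0 + (1 - 1) * 0) 0 - (1 * V 0 0 + (1 - 1) * V 0 0),
      1, h11, 0, h01, 0, h01, 0, h01, Or.inl rfl⟩
  have hSbdd : BddAbove S := by
    refine ⟨2 * M, ?_⟩
    rintro d ⟨c', hc', a, ha, b, hb, q, hq, hd | hd⟩ <;>
    · subst hd
      have hmem := combo_mem hc' ha hb
      have h1 := hM _ hmem q hq
      have h2 := hM a ha q hq
      have h3 := hM b hb q hq
      have h4 := hM q hq _ hmem
      have h5 := hM q hq a ha
      have h6 := hM q hq b hb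
      have hc0 := hc'.1; have hc1 := hc'.2
      rw [abs_le] at h1 h2 h3 h4 h5 h6
      have e1 := mul_le_mul_of_nonneg_left h2.1 hc0
      have e2 := mul_le_mul_of_nonneg_left h3.1 (by linarith : (0:ℝ) ≤ 1 - c')
      have e3 := mul_le_mul_of_nonneg_left h5.1 hc0
      have e4 := mul_le_mul_of_nonneg_left h6.1 (by linarith : (0:ℝ) ≤ 1 - c')
      linarith [h1.2, h4.2, e1, e2, e3, e4]
  set D : ℝ := sSup S with hDdef
  set E : ℝ := max D 0 with hEdef
  have hE0 : 0 ≤ E := le_max_right _ _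
  have hl01' : l0 ≤ l1 := le_of_lt hl01
  -- each Q-value is at most V
  have hQle : ∀ (a : PAct), ∀ x ∈ Icc (0:ℝ) 1, ∀ y ∈ Icc (0:ℝ) 1,
      Q l0 l1 β Rl Rh Cl Ch V a x y ≤ V x y := by
    intro a x hx y hy
    rw [hVfix x hx y hy]
    cases a
    · exact le_max_of_le_left (le_max_left _ _)
    · exact le_max_of_le_left (le_max_right _ _)
    · exact le_max_of_le_right (le_max_left _ _)
    · exact le_max_of_le_right (le_max_right _ _)
  -- defect bounds from the sup
  have hdef1 : ∀ c' ∈ Icc (0:ℝ) 1, ∀ a ∈ Icc (0:ℝ) 1, ∀ b ∈ Icc (0:ℝ) 1,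
      ∀ q ∈ Icc (0:ℝ) 1,
      V (c' * a + (1 - c') * b) q ≤ c' * V a q + (1 - c') * V b q + E := by
    intro c' hc' a ha b hb q hq
    have : V (c' * a + (1 - c') * b) q - (c' * V a q + (1 - c') * V b q) ≤ D :=
      le_csSup hSbdd ⟨c', hc', a, ha, b, hb, q, hq, Or.inl rfl⟩
    have hDE : D ≤ E := le_max_left _ _
    linarith
  have hdef2 : ∀ c' ∈ Icc (0:ℝ) 1, ∀ a ∈ Icc (0:ℝ) 1, ∀ b ∈ Icc (0:ℝ) 1,
      ∀ q ∈ Icc (0:ℝ) 1,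
      V q (c' * a + (1 - c') * b) ≤ c' * V q a + (1 - c') * V q b + E := by
    intro c' hc' a ha b hb q hq
    have : V q (c' * a + (1 - c') * b) - (c' * V q a + (1 - c') * V q b) ≤ D :=
      le_csSup hSbdd ⟨c', hc', a, ha, b, hb, q, hq, Or.inr rfl⟩
    have hDE : D ≤ E := le_max_left _ _
    linarith
  -- key contraction estimate: every defect is ≤ β * E
  have hkey : ∀ d ∈ S, d ≤ β * E := by
    rintro d ⟨c', hc', a, ha, b, hb, q, hq, hd | hd⟩ <;> subst hd
    · -- first coordinate
      set m : ℝ := c' * a + (1 - c') * b with hmdef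
      have hm : m ∈ Icc (0:ℝ) 1 := combo_mem hc' ha hb
      have hgoal : V m q ≤ c' * V a q + (1 - c') * V b q + β * E := by
        rw [hVfix m hm q hq]
        have hVa := hQle PAct.Bb a ha q hq
        have hVb := hQle PAct.Bb b hb q hq
        have hVa1 := hQle PAct.B1 a ha q hq
        have hVb1 := hQle PAct.B1 b hb q hq
        have hVa2 := hQle PAct.B2 a ha q hq
        have hVb2 := hQle PAct.B2 b hb q hq
        have hVar := hQle PAct.Br a ha q hq
        have hVbr := hQle PAct.Br b hb q hq
        have hc0 := hc'.1; have hc1 := hc'.2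
        have hq0 := hq.1; have hq1 := hq.2
        have hTa := Tr_mem hl0 hl1 hl01' ha
        have hTb := Tr_mem hl0 hl1 hl01' hb
        have hTq := Tr_mem hl0 hl1 hl01' hq
        refine max_le (max_le ?_ ?_) (max_le ?_ ?_)
        · -- Bb : affine in first coordinate
          have heq : Q l0 l1 β Rl Rh Cl Ch V PAct.Bb m q
              = c' * Q l0 l1 β Rl Rh Cl Ch V PAct.Bb a q
                + (1 - c') * Q l0 l1 β Rl Rh Cl Ch V PAct.Bb b q := by
            simp only [Q, hmdef]; ring
          have hca' := mul_le_mul_of_nonneg_left hVa hc0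
          have hcb' := mul_le_mul_of_nonneg_left hVb (by linarith : (0:ℝ) ≤ 1 - c')
          have hbE := mul_nonneg hβ0 hE0
          linarith [heq, hca', hcb']
        · -- B1 : affine in first coordinate
          have heq : Q l0 l1 β Rl Rh Cl Ch V PAct.B1 m q
              = c' * Q l0 l1 β Rl Rh Cl Ch V PAct.B1 a q
                + (1 - c') * Q l0 l1 β Rl Rh Cl Ch V PAct.B1 b q := by
            simp only [Q, hmdef]; ring
          have hca' := mul_le_mul_of_nonneg_left hVa1 hc0
          have hcb' := mul_le_mul_of_nonneg_left hVb1 (by linarith : (0:ℝ) ≤ 1 - c')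
          have hbE := mul_nonneg hβ0 hE0
          linarith [heq, hca', hcb']
        · -- B2 : uses convexity defect in first coordinate
          have h1 : V (Tr l0 l1 m) l1 ≤
              c' * V (Tr l0 l1 a) l1 + (1 - c') * V (Tr l0 l1 b) l1 + E := by
            have := hdef1 c' hc' (Tr l0 l1 a) hTa (Tr l0 l1 b) hTb l1 hl1
            rwa [hmdef, Tr_combo]
          have h0 : V (Tr l0 l1 m) l0 ≤
              c' * V (Tr l0 l1 a) l0 + (1 - c') * V (Tr l0 l1 b) l0 + E := by
            have := hdef1 c' hc' (Tr l0 l1 a) hTa (Tr l0 l1 b) hTb l0 hl0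
            rwa [hmdef, Tr_combo]
          have h1' := mul_le_mul_of_nonneg_left h1 (mul_nonneg hβ0 hq0)
          have h0' := mul_le_mul_of_nonneg_left h0 (mul_nonneg hβ0 (by linarith : (0:ℝ) ≤ 1 - q))
          have hca := mul_le_mul_of_nonneg_left hVa2 hc0
          have hcb := mul_le_mul_of_nonneg_left hVb2 (by linarith : (0:ℝ) ≤ 1 - c')
          simp only [Q] at hca hcb ⊢
          linarith [h1', h0', hca, hcb]
        · -- Br : uses convexity defect in first coordinate
          have h1 : V (Tr l0 l1 m) (Tr l0 l1 q) ≤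
              c' * V (Tr l0 l1 a) (Tr l0 l1 q) + (1 - c') * V (Tr l0 l1 b) (Tr l0 l1 q) + E := by
            have := hdef1 c' hc' (Tr l0 l1 a) hTa (Tr l0 l1 b) hTb (Tr l0 l1 q) hTq
            rwa [hmdef, Tr_combo]
          have h1' := mul_le_mul_of_nonneg_left h1 hβ0
          have hca := mul_le_mul_of_nonneg_left hVar hc0
          have hcb := mul_le_mul_of_nonneg_left hVbr (by linarith : (0:ℝ) ≤ 1 - c')
          simp only [Q] at hca hcb ⊢
          linarith [h1', hca, hcb]
      linarith
    · -- second coordinate (symmetric)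
      set m : ℝ := c' * a + (1 - c') * b with hmdef
      have hm : m ∈ Icc (0:ℝ) 1 := combo_mem hc' ha hb
      have hgoal : V q m ≤ c' * V q a + (1 - c') * V q b + β * E := by
        rw [hVfix q hq m hm]
        have hVa := hQle PAct.Bb q hq a ha
        have hVb := hQle PAct.Bb q hq b hb
        have hVa1 := hQle PAct.B1 q hq a ha
        have hVb1 := hQle PAct.B1 q hq b hb
        have hVa2 := hQle PAct.B2 q hq a ha
        have hVb2 := hQle PAct.B2 q hq b hb
        have hVar := hQle PAct.Br q hq a ha
        have hVbr := hQle PAct.Br q hq b hb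
        have hc0 := hc'.1; have hc1 := hc'.2
        have hq0 := hq.1; have hq1 := hq.2
        have hTa := Tr_mem hl0 hl1 hl01' ha
        have hTb := Tr_mem hl0 hl1 hl01' hb
        have hTq := Tr_mem hl0 hl1 hl01' hq
        refine max_le (max_le ?_ ?_) (max_le ?_ ?_)
        · -- Bb : affine in second coordinate
          have heq : Q l0 l1 β Rl Rh Cl Ch V PAct.Bb q m
              = c' * Q l0 l1 β Rl Rh Cl Ch V PAct.Bb q a
                + (1 - c') * Q l0 l1 β Rl Rh Cl Ch V PAct.Bb q b := by
            simp only [Q, hmdef]; ring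
          have hca' := mul_le_mul_of_nonneg_left hVa hc0
          have hcb' := mul_le_mul_of_nonneg_left hVb (by linarith : (0:ℝ) ≤ 1 - c')
          have hbE := mul_nonneg hβ0 hE0
          linarith [heq, hca', hcb']
        · -- B1 : uses convexity defect in second coordinate
          have h1 : V l1 (Tr l0 l1 m) ≤
              c' * V l1 (Tr l0 l1 a) + (1 - c') * V l1 (Tr l0 l1 b) + E := by
            have := hdef2 c' hc' (Tr l0 l1 a) hTa (Tr l0 l1 b) hTb l1 hl1
            rwa [hmdef, Tr_combo]
          have h0 : V l0 (Tr l0 l1 m) ≤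
              c' * V l0 (Tr l0 l1 a) + (1 - c') * V l0 (Tr l0 l1 b) + E := by
            have := hdef2 c' hc' (Tr l0 l1 a) hTa (Tr l0 l1 b) hTb l0 hl0
            rwa [hmdef, Tr_combo]
          have h1' := mul_le_mul_of_nonneg_left h1 (mul_nonneg hβ0 hq0)
          have h0' := mul_le_mul_of_nonneg_left h0 (mul_nonneg hβ0 (by linarith : (0:ℝ) ≤ 1 - q))
          have hca := mul_le_mul_of_nonneg_left hVa1 hc0
          have hcb := mul_le_mul_of_nonneg_left hVb1 (by linarith : (0:ℝ) ≤ 1 - c')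
          simp only [Q] at hca hcb ⊢
          linarith [h1', h0', hca, hcb]
        · -- B2 : affine in second coordinate
          have heq : Q l0 l1 β Rl Rh Cl Ch V PAct.B2 q m
              = c' * Q l0 l1 β Rl Rh Cl Ch V PAct.B2 q a
                + (1 - c') * Q l0 l1 β Rl Rh Cl Ch V PAct.B2 q b := by
            simp only [Q, hmdef]; ring
          have hca' := mul_le_mul_of_nonneg_left hVa2 hc0
          have hcb' := mul_le_mul_of_nonneg_left hVb2 (by linarith : (0:ℝ) ≤ 1 - c')
          have hbE := mul_nonneg hβ0 hE0
          linarith [heq, hca', hcb']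
        · -- Br : uses convexity defect in second coordinate
          have h1 : V (Tr l0 l1 q) (Tr l0 l1 m) ≤
              c' * V (Tr l0 l1 q) (Tr l0 l1 a) + (1 - c') * V (Tr l0 l1 q) (Tr l0 l1 b) + E := by
            have := hdef2 c' hc' (Tr l0 l1 a) hTa (Tr l0 l1 b) hTb (Tr l0 l1 q) hTq
            rwa [hmdef, Tr_combo]
          have h1' := mul_le_mul_of_nonneg_left h1 hβ0
          have hca := mul_le_mul_of_nonneg_left hVar hc0
          have hcb := mul_le_mul_of_nonneg_left hVbr (by linarith : (0:ℝ) ≤ 1 - c')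
          simp only [Q] at hca hcb ⊢
          linarith [h1', hca, hcb]
      linarith
  have hDle : D ≤ β * E := csSup_le hSne hkey
  have hD0 : D ≤ 0 := by
    by_contra h
    push_neg at h
    have hE : E = D := max_eq_left (le_of_lt h)
    rw [hE] at hDle
    nlinarith
  have hE00 : E = 0 := max_eq_right hD0
  constructor
  · have : V (c * p + (1 - c) * p') p2 - (c * V p p2 + (1 - c) * V p' p2) ≤ D :=
      le_csSup hSbdd ⟨c, hc, p, hp, p', hp', p2, hp2, Or.inl rfl⟩
    linarith
  · have : V p1 (c * p + (1 - c) * p') - (c * V p1 p + (1 - c) * V p1 p') ≤ D :=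
      le_csSup hSbdd ⟨c, hc, p, hp, p', hp', p1, hp1, Or.inr rfl⟩
    linarith
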